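/- If M is a uniquely restricted matching in a graph G' obtained from G by deleting two adjacent vertices u, v and adding a new edge u'w (where u' and w are vertices of G'), and uu', vw, uv are edges of G, then either M ∪ {uv} (if u'w ∉ M) or (M \ {u'w}) ∪ {uu', vw} (if u'w ∈ M) is a matching in G covering exactly M's vertices plus {u,v}; under the bridge hypotheses of the paper (uu' and vw bridges of G), this matching is uniquely restricted in G. -/

import Mathlib

open SimpleGraph

/-- A set of edges `M` is a matching in `G` if all its elements are edges of `G`
and distinct edges of `M` share no endpoint. -/
def IsMatchingSet {V : Type*} (G : SimpleGraph V) (M : Set (Sym2 V)) : Prop :=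
  M ⊆ G.edgeSet ∧ M.Pairwise fun e f => ∀ v : V, v ∈ e → v ∉ f

/-- The set of vertices covered by a set of edges. -/
def coveredVerts {V : Type*} (M : Set (Sym2 V)) : Set V := {v | ∃ e ∈ M, v ∈ e}

/-- A matching is uniquely restricted if no other matching covers the same vertex set. -/
def IsURMatching {V : Type*} (G : SimpleGraph V) (M : Set (Sym2 V)) : Prop :=
  IsMatchingSet G M ∧
    ∀ N : Set (Sym2 V), IsMatchingSet G N → coveredVerts N = coveredVerts M → N = M

/-- An `M`-alternating cycle: a cycle whose edges alternate (cyclically)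
between `M` and the complement of `M`. -/
def IsAltCycle {V : Type*} (G : SimpleGraph V) (M : Set (Sym2 V)) {v : V}
    (c : G.Walk v v) : Prop :=
  c.IsCycle ∧ List.Chain' (fun e f => (e ∈ M) ↔ ¬ (f ∈ M)) c.edges ∧
    ∀ e f : Sym2 V, c.edges.head? = some e → c.edges.getLast? = some f →
      ((f ∈ M) ↔ ¬ (e ∈ M))

/-- The graph obtained from `G` by deleting the vertices in `S`
(they remain as isolated vertices). -/
def delVerts {V : Type*} (G : SimpleGraph V) (S : Set V) : SimpleGraph V where
  Adj x y := G.Adj x y ∧ x ∉ S ∧ y ∉ S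
  symm := by constructor; rintro x y ⟨h, hx, hy⟩; exact ⟨h.symm, hy, hx⟩
  loopless := by constructor; rintro x ⟨h, -, -⟩; exact (G.ne_of_adj h) rfl

/-- The maximum size of a uniquely restricted matching in `G`. -/
noncomputable def nuUR {V : Type*} (G : SimpleGraph V) : ℕ :=
  sSup {k | ∃ M : Set (Sym2 V), IsURMatching G M ∧ M.ncard = k}

/-- The matching number of `G`. -/
noncomputable def nuM {V : Type*} (G : SimpleGraph V) : ℕ :=
  sSup {k | ∃ M : Set (Sym2 V), IsMatchingSet G M ∧ M.ncard = k}

/-- A bridge is good if it lies on a path between two vertices of degree at most 2. -/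
def IsGoodBridge {V : Type*} [Fintype V] (G : SimpleGraph V) [DecidableRel G.Adj]
    (e : Sym2 V) : Prop :=
  G.IsBridge e ∧ ∃ (x y : V) (p : G.Walk x y),
    p.IsPath ∧ G.degree x ≤ 2 ∧ G.degree y ≤ 2 ∧ e ∈ p.edges

lemma matching_unique {V : Type*} {G : SimpleGraph V} {P : Set (Sym2 V)}
    (hP : IsMatchingSet G P) {e f : Sym2 V} (he : e ∈ P) (hf : f ∈ P)
    {x : V} (hxe : x ∈ e) (hxf : x ∈ f) : e = f := by
  by_contra h
  exact hP.2 he hf h x hxe hxf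

lemma engine_aux {V : Type*} [Fintype V] {G : SimpleGraph V} {N P : Set (Sym2 V)}
    (hN : IsMatchingSet G N) (hP : IsMatchingSet G P)
    (hcov : coveredVerts N = coveredVerts P) {a b : V} (he : G.IsBridge s(a, b))
    (heN : s(a, b) ∈ N) (heP : s(a, b) ∉ P) : False := by
  classical
  have hbr := isBridge_iff.mp he
  -- the symmetric difference minus the edge e
  set e : Sym2 V := s(a, b) with he_def
  let D : SimpleGraph V :=
    { Adj := fun x y => s(x, y) ≠ e ∧
        ((s(x, y) ∈ N ∧ s(x, y) ∉ P) ∨ (s(x, y) ∈ P ∧ s(x, y) ∉ N))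
      symm := by
        constructor
        intro x y h
        rwa [Sym2.eq_swap] at h
      loopless := by
        constructor
        intro x h
        rcases h.2 with ⟨h1, _⟩ | ⟨h1, _⟩
        · exact G.ne_of_adj (hN.1 h1) rfl
        · exact G.ne_of_adj (hP.1 h1) rfl }
  have hDG : ∀ {x y}, D.Adj x y → G.Adj x y := by
    rintro x y ⟨_, ⟨h1, _⟩ | ⟨h1, _⟩⟩
    · exact hN.1 h1
    · exact hP.1 h1
  have hDle : D ≤ G \ fromEdgeSet {e} := by
    intro x y hxy
    refine ⟨hDG hxy, ?_⟩
    rw [fromEdgeSet_adj]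
    rintro ⟨h1, -⟩
    exact hxy.1 (by simpa using h1)
  have hnb : ¬ D.Reachable a b := fun h => hbr (h.mono hDle)
  -- the P-edge at a
  have haP : a ∈ coveredVerts P := hcov ▸ ⟨e, heN, Sym2.mem_mk_left a b⟩
  obtain ⟨ep, hepP, haep⟩ := haP
  obtain ⟨pa, rfl⟩ := Sym2.mem_iff_exists.mp haep
  have hpaa : pa ≠ a := fun h => G.ne_of_adj (by simpa [h] using hP.1 hepP : G.Adj a a) rfl
  -- component-of-a graph
  let H : SimpleGraph V :=
    { Adj := fun x y => D.Adj x y ∧ D.Reachable a x ∧ D.Reachable a y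
      symm := ⟨fun x y ⟨h1, h2, h3⟩ => ⟨h1.symm, h3, h2⟩⟩
      loopless := ⟨fun x ⟨h1, _, _⟩ => D.ne_of_adj h1 rfl⟩ }
  have hDa : ∀ y, D.Adj a y ↔ y = pa := by
    intro y
    constructor
    · rintro ⟨hne, ⟨h1, h2⟩ | ⟨h1, h2⟩⟩
      · exact absurd (matching_unique hN h1 heN (Sym2.mem_mk_left a y)
          (Sym2.mem_mk_left a b)) hne
      · have := matching_unique hP h1 hepP (Sym2.mem_mk_left a y) (Sym2.mem_mk_left a pa)
        exact Sym2.congr_right.mp this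
    · rintro rfl
      refine ⟨fun h => heP (h ▸ hepP), Or.inr ⟨hepP, fun h => ?_⟩⟩
      have := matching_unique hN h heN (Sym2.mem_mk_left a _) (Sym2.mem_mk_left a b)
      exact heP (this ▸ hepP)
  have hHa : H.neighborFinset a = {pa} := by
    ext y
    simp only [mem_neighborFinset, Finset.mem_singleton]
    constructor
    · rintro ⟨h1, -, -⟩
      exact (hDa y).mp h1
    · rintro rfl
      have h1 := (hDa _).mpr rfl
      exact ⟨h1, Reachable.refl a, h1.reachable⟩
  have hdega : H.degree a = 1 := by
    rw [SimpleGraph.degree, hHa, Finset.card_singleton]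
  have hdegx : ∀ x, x ≠ a → Even (H.degree x) := by
    intro x hxa
    by_cases hx : D.Reachable a x
    · have hxb : x ≠ b := fun h => hnb (h ▸ hx)
      have hHx : ∀ y, H.Adj x y ↔ D.Adj x y := fun y =>
        ⟨fun h => h.1, fun h => ⟨h, hx, hx.trans h.reachable⟩⟩
      by_cases hcx : x ∈ coveredVerts N
      · obtain ⟨en, henN, hxen⟩ := hcx
        obtain ⟨n, rfl⟩ := Sym2.mem_iff_exists.mp hxen
        have hcxP : x ∈ coveredVerts P := hcov ▸ ⟨s(x, n), henN, Sym2.mem_mk_left x n⟩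
        obtain ⟨eq, heqP, hxeq⟩ := hcxP
        obtain ⟨p, rfl⟩ := Sym2.mem_iff_exists.mp hxeq
        by_cases heq : s(x, n) = s(x, p)
        · -- degree 0
          have : H.neighborFinset x = ∅ := by
            ext y
            simp only [mem_neighborFinset, Finset.notMem_empty, iff_false]
            intro hy
            rcases ((hHx y).mp hy).2 with ⟨h1, h2⟩ | ⟨h1, h2⟩
            · have := matching_unique hN h1 henN (Sym2.mem_mk_left x y) (Sym2.mem_mk_left x n)
              exact h2 (by rw [this, heq]; exact heqP)
            · have := matching_unique hP h1 heqP (Sym2.mem_mk_left x y) (Sym2.mem_mk_left x p)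
              exact h2 (by rw [this, ← heq]; exact henN)
          simp [SimpleGraph.degree, this]
        · -- degree 2
          have hnp : n ≠ p := fun h => heq (by rw [h])
          have hxe' : ∀ {c : V}, s(x, c) ≠ e := by
            intro c h
            have : x ∈ e := h ▸ Sym2.mem_mk_left x c
            rw [he_def, Sym2.mem_iff] at this
            rcases this with rfl | rfl
            · exact hxa rfl
            · exact hxb rfl
          have hnN : s(x, n) ∉ P := fun h =>
            heq (matching_unique hP h heqP (Sym2.mem_mk_left x n) (Sym2.mem_mk_left x p))
          have hpN : s(x, p) ∉ N := fun h =>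
            heq (matching_unique hN henN h (Sym2.mem_mk_left x n) (Sym2.mem_mk_left x p))
          have : H.neighborFinset x = {n, p} := by
            ext y
            rw [mem_neighborFinset, hHx y, Finset.mem_insert, Finset.mem_singleton]
            constructor
            · rintro ⟨-, ⟨h1, -⟩ | ⟨h1, -⟩⟩
              · exact Or.inl (Sym2.congr_right.mp
                  (matching_unique hN h1 henN (Sym2.mem_mk_left x y) (Sym2.mem_mk_left x n)))
              · exact Or.inr (Sym2.congr_right.mp
                  (matching_unique hP h1 heqP (Sym2.mem_mk_left x y) (Sym2.mem_mk_left x p)))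
            · rintro (rfl | rfl)
              · exact ⟨hxe', Or.inl ⟨henN, hnN⟩⟩
              · exact ⟨hxe', Or.inr ⟨heqP, hpN⟩⟩
          rw [SimpleGraph.degree, this, Finset.card_insert_of_notMem (by simpa using hnp),
            Finset.card_singleton]
          exact ⟨1, rfl⟩
      · have : H.neighborFinset x = ∅ := by
          ext y
          simp only [mem_neighborFinset, Finset.notMem_empty, iff_false]
          intro hy
          rcases ((hHx y).mp hy).2 with ⟨h1, -⟩ | ⟨h1, -⟩
          · exact hcx ⟨_, h1, Sym2.mem_mk_left x y⟩
          · exact hcx (hcov ▸ (⟨_, h1, Sym2.mem_mk_left x y⟩ : x ∈ coveredVerts P))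
        simp [SimpleGraph.degree, this]
    · have : H.neighborFinset x = ∅ := by
        ext y
        simp only [mem_neighborFinset, Finset.notMem_empty, iff_false]
        exact fun hy => hx hy.2.1
      simp [SimpleGraph.degree, this]
  have hsum : ∑ x, H.degree x = 2 * H.edgeFinset.card := by
    convert H.sum_degrees_eq_twice_card_edges
  rw [← Finset.sum_erase_add _ _ (Finset.mem_univ a), hdega] at hsum
  have heven : Even (∑ x ∈ Finset.univ.erase a, H.degree x) :=
    Finset.even_sum _ fun x hx => hdegx x (Finset.ne_of_mem_erase hx)
  obtain ⟨k, hk⟩ := heven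
  rw [hk] at hsum
  omega
  

lemma engine {V : Type*} [Fintype V] {G : SimpleGraph V} {N P : Set (Sym2 V)}
    (hN : IsMatchingSet G N) (hP : IsMatchingSet G P)
    (hcov : coveredVerts N = coveredVerts P) {e : Sym2 V} (he : G.IsBridge e) :
    e ∈ N ↔ e ∈ P := by
  induction e using Sym2.ind with
  | _ a b =>
    constructor
    · intro h
      by_contra h'
      exact engine_aux hN hP hcov he h h'
    · intro h
      by_contra h'
      exact engine_aux hP hN hcov.symm he h h'

/-- Let `uv, uu', vw ∈ E(G)` with `u` of degree `2` with neighbors `v, u'`, and let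
`uu'` and `vw` be bridges of `G`. If `M` is a uniquely restricted matching in
`G' = (G - {u,v}) + u'w`, then `M ∪ {uv}` (if `u'w ∉ M`), respectively
`(M \ {u'w}) ∪ {uu', vw}` (if `u'w ∈ M`), is a uniquely restricted matching in `G`
covering exactly the vertices covered by `M` together with `u` and `v`. -/
theorem stmt17 {V : Type*} [Fintype V] (G : SimpleGraph V) [DecidableRel G.Adj]
    (u v u' w : V) (huv : G.Adj u v) (huu' : G.Adj u u') (hvw : G.Adj v w)
    (hdegu : G.degree u = 2)
    (hbr1 : G.IsBridge s(u, u')) (hbr2 : G.IsBridge s(v, w))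
    (hu' : u' ≠ u ∧ u' ≠ v) (hw : w ≠ u ∧ w ≠ v)
    (M : Set (Sym2 V))
    (hM : IsURMatching (delVerts G {u, v} ⊔ fromEdgeSet {s(u', w)}) M) :
    (s(u', w) ∉ M →
      IsURMatching G (insert s(u, v) M) ∧
        coveredVerts (insert s(u, v) M) = coveredVerts M ∪ {u, v}) ∧
    (s(u', w) ∈ M →
      IsURMatching G (insert s(u, u') (insert s(v, w) (M \ {s(u', w)}))) ∧
        coveredVerts (insert s(u, u') (insert s(v, w) (M \ {s(u', w)}))) =
          coveredVerts M ∪ {u, v}) := by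
  classical
  obtain ⟨⟨hMsub, hMpair⟩, hMur⟩ := hM
  have hsymm : Symmetric fun (e f : Sym2 V) => ∀ z : V, z ∈ e → z ∉ f :=
    fun e f h z hz hz' => h z hz' hz
  haveI : Std.Symm fun (e f : Sym2 V) => ∀ z : V, z ∈ e → z ∉ f := ⟨fun _ _ h => hsymm h⟩
  -- endpoints of M-edges avoid u and v
  have hMnotuv : ∀ {f : Sym2 V}, f ∈ M → ∀ {z : V}, z ∈ f → z ≠ u ∧ z ≠ v := by
    intro f hf
    induction f using Sym2.ind with
    | _ x y =>
      intro z hz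
      have hadj : (delVerts G {u, v} ⊔ fromEdgeSet {s(u', w)}).Adj x y :=
        hMsub hf
      rw [sup_adj] at hadj
      have hxy : (x ≠ u ∧ x ≠ v) ∧ (y ≠ u ∧ y ≠ v) := by
        rcases hadj with ⟨-, hx, hy⟩ | h
        · exact ⟨⟨fun hh => hx (by rw [hh]; exact Set.mem_insert _ _),
            fun hh => hx (by rw [hh]; exact Set.mem_insert_iff.mpr (Or.inr rfl))⟩,
            ⟨fun hh => hy (by rw [hh]; exact Set.mem_insert _ _),
            fun hh => hy (by rw [hh]; exact Set.mem_insert_iff.mpr (Or.inr rfl))⟩⟩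
        · rw [fromEdgeSet_adj, Set.mem_singleton_iff] at h
          rcases Sym2.eq_iff.mp h.1 with ⟨rfl, rfl⟩ | ⟨rfl, rfl⟩
          · exact ⟨⟨hu'.1, hu'.2⟩, ⟨hw.1, hw.2⟩⟩
          · exact ⟨⟨hw.1, hw.2⟩, ⟨hu'.1, hu'.2⟩⟩
      rcases Sym2.mem_iff.mp hz with rfl | rfl
      · exact hxy.1
      · exact hxy.2
  have hcovMnotuv : ∀ z ∈ coveredVerts M, z ≠ u ∧ z ≠ v := by
    rintro z ⟨f, hf, hz⟩
    exact hMnotuv hf hz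
  -- M-edges other than s(u',w) are G-edges
  have hMG : ∀ {f : Sym2 V}, f ∈ M → f ≠ s(u', w) → f ∈ G.edgeSet := by
    intro f hf
    induction f using Sym2.ind with
    | _ x y =>
      intro hne
      have hadj : (delVerts G {u, v} ⊔ fromEdgeSet {s(u', w)}).Adj x y :=
        hMsub hf
      rw [sup_adj] at hadj
      rcases hadj with ⟨h, -, -⟩ | h
      · exact h
      · rw [fromEdgeSet_adj, Set.mem_singleton_iff] at h
        exact absurd h.1 hne
  -- the neighbors of u are exactly v and u'
  have hux : ∀ {x : V}, G.Adj u x → x = v ∨ x = u' := by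
    intro x hadj
    by_contra hcon
    push_neg at hcon
    have hsub : ({v, u', x} : Finset V) ⊆ G.neighborFinset u := by
      intro z hz
      rw [mem_neighborFinset]
      rcases Finset.mem_insert.mp hz with rfl | hz
      · exact huv
      rcases Finset.mem_insert.mp hz with rfl | hz
      · exact huu'
      · rw [Finset.mem_singleton.mp hz]; exact hadj
    have hcard : ({v, u', x} : Finset V).card = 3 := by
      rw [Finset.card_insert_of_notMem, Finset.card_insert_of_notMem, Finset.card_singleton]
      · simp only [Finset.mem_singleton]
        exact fun h => hcon.2 h.symm
      · simp only [Finset.mem_insert, Finset.mem_singleton]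
        push_neg
        exact ⟨fun h => hu'.2 h.symm, fun h => hcon.1 h.symm⟩
    have := Finset.card_le_card hsub
    rw [hcard] at this
    rw [← SimpleGraph.card_neighborFinset_eq_degree] at hdegu
    omega
  constructor
  · -- Case 1 : s(u', w) ∉ M
    intro hnot
    have hsub1 : insert s(u, v) M ⊆ G.edgeSet := by
      rintro f (rfl | hf)
      · exact huv
      · exact hMG hf (fun h => hnot (h ▸ hf))
    have hpair1 : (insert s(u, v) M).Pairwise fun e f => ∀ z : V, z ∈ e → z ∉ f := by
      rw [Set.pairwise_insert_of_symm]
      refine ⟨hMpair, fun f hf _ z hz hzf => ?_⟩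
      rcases Sym2.mem_iff.mp hz with rfl | rfl
      · exact (hMnotuv hf hzf).1 rfl
      · exact (hMnotuv hf hzf).2 rfl
    have hM'1 : IsMatchingSet G (insert s(u, v) M) := ⟨hsub1, hpair1⟩
    have hcov1 : coveredVerts (insert s(u, v) M) = coveredVerts M ∪ {u, v} := by
      ext z
      simp only [coveredVerts, Set.mem_setOf_eq, Set.mem_insert_iff, Set.mem_union,
        Set.mem_singleton_iff]
      constructor
      · rintro ⟨f, (rfl | hf), hz⟩
        · exact Or.inr (Sym2.mem_iff.mp hz)
        · exact Or.inl ⟨f, hf, hz⟩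
      · rintro (⟨f, hf, hz⟩ | (rfl | rfl))
        · exact ⟨f, Or.inr hf, hz⟩
        · exact ⟨s(z, v), Or.inl rfl, Sym2.mem_mk_left z v⟩
        · exact ⟨s(u, z), Or.inl rfl, Sym2.mem_mk_right u z⟩
    refine ⟨⟨hM'1, ?_⟩, hcov1⟩
    intro N hN hNcov0
    have hNcov' : coveredVerts N = coveredVerts M ∪ {u, v} := hNcov0.trans hcov1
    -- u is covered by N
    have huN : u ∈ coveredVerts N := by rw [hNcov']; simp
    obtain ⟨f, hfN, huf⟩ := huN
    obtain ⟨x, rfl⟩ := Sym2.mem_iff_exists.mp huf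
    have hadjux : G.Adj u x := hN.1 hfN
    have huvN : s(u, v) ∈ N := by
      rcases hux hadjux with h | h
      · rw [h] at hfN
        exact hfN
      · rw [h] at hfN
        exfalso
        have h1 : s(u, u') ∈ insert s(u, v) M :=
          (engine hN hM'1 hNcov0 hbr1).mp hfN
        rcases h1 with h1 | h1
        · rcases Sym2.eq_iff.mp h1 with ⟨-, h2⟩ | ⟨h2, -⟩
          · exact hu'.2 h2
          · exact huv.ne h2
        · exact (hMnotuv h1 (Sym2.mem_mk_left u u')).1 rfl
    have hfavoid : ∀ {f : Sym2 V}, f ∈ N → f ≠ s(u, v) → ∀ {z : V}, z ∈ f →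
        z ≠ u ∧ z ≠ v := by
      intro f hf hne z hz
      constructor
      · rintro rfl
        exact hne (matching_unique hN hf huvN hz (Sym2.mem_mk_left z v))
      · rintro rfl
        exact hne (matching_unique hN hf huvN hz (Sym2.mem_mk_right u z))
    have hN0 : IsMatchingSet (delVerts G {u, v} ⊔ fromEdgeSet {s(u', w)}) (N \ {s(u, v)}) := by
      constructor
      · intro f hf
        have hfne : f ≠ s(u, v) := by simpa using hf.2
        have hfN' := hf.1
        clear hf
        induction f using Sym2.ind with
        | _ x y =>
          have hx := hfavoid hfN' hfne (Sym2.mem_mk_left x y)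
          have hy := hfavoid hfN' hfne (Sym2.mem_mk_right x y)
          rw [mem_edgeSet, sup_adj]
          left
          refine ⟨hN.1 hfN', ?_, ?_⟩
          · simp only [Set.mem_insert_iff, Set.mem_singleton_iff]
            push_neg
            exact hx
          · simp only [Set.mem_insert_iff, Set.mem_singleton_iff]
            push_neg
            exact hy
      · exact hN.2.mono Set.diff_subset
    have hcovN0 : coveredVerts (N \ {s(u, v)}) = coveredVerts M := by
      ext z
      constructor
      · rintro ⟨f, hf, hz⟩
        have hzuv := hfavoid hf.1 (by simpa using hf.2) hz
        have hzN : z ∈ coveredVerts N := ⟨f, hf.1, hz⟩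
        rw [hNcov'] at hzN
        rcases hzN with h | h
        · exact h
        · rcases h with rfl | h
          · exact absurd rfl hzuv.1
          · exact absurd (Set.mem_singleton_iff.mp h) hzuv.2
      · intro hz
        have hzuv := hcovMnotuv z hz
        have hzN : z ∈ coveredVerts N := by rw [hNcov']; exact Or.inl hz
        obtain ⟨f, hfN', hzf⟩ := hzN
        refine ⟨f, ⟨hfN', ?_⟩, hzf⟩
        simp only [Set.mem_singleton_iff]
        rintro rfl
        rcases Sym2.mem_iff.mp hzf with rfl | rfl
        · exact hzuv.1 rfl
        · exact hzuv.2 rfl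
    have hNM := hMur _ hN0 hcovN0
    rw [← Set.insert_diff_singleton.trans (Set.insert_eq_of_mem huvN), hNM]
  · -- Case 2 : s(u', w) ∈ M
    intro hmem
    have hu'w : u' ≠ w := by
      intro h
      exact ((delVerts G {u, v} ⊔ fromEdgeSet {s(u', w)}).not_isDiag_of_mem_edgeSet
        (hMsub hmem)) (Sym2.mk_isDiag_iff.mpr h)
    have huniq' : ∀ {f : Sym2 V}, f ∈ M → f ≠ s(u', w) → ∀ {z : V}, z ∈ f →
        z ≠ u' ∧ z ≠ w := by
      intro f hf hne z hz
      constructor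
      · rintro rfl
        exact hne (matching_unique ⟨hMsub, hMpair⟩ hf hmem hz (Sym2.mem_mk_left z w))
      · rintro rfl
        exact hne (matching_unique ⟨hMsub, hMpair⟩ hf hmem hz (Sym2.mem_mk_right u' z))
    have hu'cov : u' ∈ coveredVerts M := ⟨_, hmem, Sym2.mem_mk_left u' w⟩
    have hwcov : w ∈ coveredVerts M := ⟨_, hmem, Sym2.mem_mk_right u' w⟩
    have hsub2 : insert s(u, u') (insert s(v, w) (M \ {s(u', w)})) ⊆ G.edgeSet := by
      rintro f (rfl | rfl | hf)
      · exact huu'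
      · exact hvw
      · exact hMG hf.1 (by simpa using hf.2)
    have hpair2 : (insert s(u, u') (insert s(v, w) (M \ {s(u', w)}))).Pairwise
        fun e f => ∀ z : V, z ∈ e → z ∉ f := by
      rw [Set.pairwise_insert_of_symm, Set.pairwise_insert_of_symm]
      refine ⟨⟨hMpair.mono Set.diff_subset, ?_⟩, ?_⟩
      · intro f hf hne z hz hzf
        rcases Sym2.mem_iff.mp hz with rfl | rfl
        · exact (hMnotuv hf.1 hzf).2 rfl
        · exact (huniq' hf.1 (by simpa using hf.2) hzf).2 rfl
      · intro f hf hne z hz hzf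
        rcases Sym2.mem_iff.mp hz with rfl | rfl
        · rcases hf with rfl | hf
          · rcases Sym2.mem_iff.mp hzf with h | h
            · exact huv.ne h
            · exact hw.1 h.symm
          · exact (hMnotuv hf.1 hzf).1 rfl
        · rcases hf with rfl | hf
          · rcases Sym2.mem_iff.mp hzf with h | h
            · exact hu'.2 h
            · exact hu'w h
          · exact (huniq' hf.1 (by simpa using hf.2) hzf).1 rfl
    have hM'2 : IsMatchingSet G (insert s(u, u') (insert s(v, w) (M \ {s(u', w)}))) :=
      ⟨hsub2, hpair2⟩
    have hcov2 : coveredVerts (insert s(u, u') (insert s(v, w) (M \ {s(u', w)}))) =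
        coveredVerts M ∪ {u, v} := by
      ext z
      simp only [coveredVerts, Set.mem_setOf_eq, Set.mem_insert_iff, Set.mem_union,
        Set.mem_singleton_iff, Set.mem_diff]
      constructor
      · rintro ⟨f, (rfl | rfl | ⟨hf, -⟩), hz⟩
        · rcases Sym2.mem_iff.mp hz with rfl | rfl
          · exact Or.inr (Or.inl rfl)
          · exact Or.inl hu'cov
        · rcases Sym2.mem_iff.mp hz with rfl | rfl
          · exact Or.inr (Or.inr rfl)
          · exact Or.inl hwcov
        · exact Or.inl ⟨f, hf, hz⟩
      · rintro (⟨f, hf, hz⟩ | (rfl | rfl))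
        · by_cases hfe : f = s(u', w)
          · subst hfe
            rcases Sym2.mem_iff.mp hz with rfl | rfl
            · exact ⟨s(u, z), Or.inl rfl, Sym2.mem_mk_right u z⟩
            · exact ⟨s(v, z), Or.inr (Or.inl rfl), Sym2.mem_mk_right v z⟩
          · exact ⟨f, Or.inr (Or.inr ⟨hf, hfe⟩), hz⟩
        · exact ⟨s(z, u'), Or.inl rfl, Sym2.mem_mk_left z u'⟩
        · exact ⟨s(z, w), Or.inr (Or.inl rfl), Sym2.mem_mk_left z w⟩
    refine ⟨⟨hM'2, ?_⟩, hcov2⟩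
    intro N hN hNcov0
    have hNcov' : coveredVerts N = coveredVerts M ∪ {u, v} := hNcov0.trans hcov2
    have huu'N : s(u, u') ∈ N :=
      (engine hN hM'2 hNcov0 hbr1).mpr (Set.mem_insert _ _)
    have hvwN : s(v, w) ∈ N :=
      (engine hN hM'2 hNcov0 hbr2).mpr
        (Set.mem_insert_iff.mpr (Or.inr (Set.mem_insert _ _)))
    have hu'wN : s(u', w) ∉ N := by
      intro h
      have := matching_unique hN h huu'N (Sym2.mem_mk_left u' w) (Sym2.mem_mk_right u u')
      rcases Sym2.eq_iff.mp this with ⟨h1, -⟩ | ⟨-, h1⟩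
      · exact hu'.1 h1
      · exact hw.1 h1
    have hNavoid : ∀ {f : Sym2 V}, f ∈ N → f ≠ s(u, u') → f ≠ s(v, w) → ∀ {z : V}, z ∈ f →
        z ≠ u ∧ z ≠ v ∧ z ≠ u' ∧ z ≠ w := by
      intro f hf hne1 hne2 z hz
      refine ⟨?_, ?_, ?_, ?_⟩
      · rintro rfl
        exact hne1 (matching_unique hN hf huu'N hz (Sym2.mem_mk_left z u'))
      · rintro rfl
        exact hne2 (matching_unique hN hf hvwN hz (Sym2.mem_mk_left z w))
      · rintro rfl
        exact hne1 (matching_unique hN hf huu'N hz (Sym2.mem_mk_right u z))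
      · rintro rfl
        exact hne2 (matching_unique hN hf hvwN hz (Sym2.mem_mk_right v z))
    have hN0 : IsMatchingSet (delVerts G {u, v} ⊔ fromEdgeSet {s(u', w)})
        (insert s(u', w) (N \ {s(u, u'), s(v, w)})) := by
      constructor
      · rintro f (rfl | hf)
        · rw [mem_edgeSet, sup_adj]
          right
          rw [fromEdgeSet_adj]
          exact ⟨rfl, hu'w⟩
        · have hfne : f ≠ s(u, u') ∧ f ≠ s(v, w) := by
            have := hf.2
            simp only [Set.mem_insert_iff, Set.mem_singleton_iff] at this
            push_neg at this
            exact this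
          have hfN' := hf.1
          clear hf
          induction f using Sym2.ind with
          | _ x y =>
            have hx := hNavoid hfN' hfne.1 hfne.2 (Sym2.mem_mk_left x y)
            have hy := hNavoid hfN' hfne.1 hfne.2 (Sym2.mem_mk_right x y)
            rw [mem_edgeSet, sup_adj]
            left
            refine ⟨hN.1 hfN', ?_, ?_⟩
            · simp only [Set.mem_insert_iff, Set.mem_singleton_iff]
              push_neg
              exact ⟨hx.1, hx.2.1⟩
            · simp only [Set.mem_insert_iff, Set.mem_singleton_iff]
              push_neg
              exact ⟨hy.1, hy.2.1⟩
      · rw [Set.pairwise_insert_of_symm]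
        refine ⟨hN.2.mono Set.diff_subset, ?_⟩
        intro f hf hne z hz hzf
        have hfne : f ≠ s(u, u') ∧ f ≠ s(v, w) := by
          have := hf.2
          simp only [Set.mem_insert_iff, Set.mem_singleton_iff] at this
          push_neg at this
          exact this
        rcases Sym2.mem_iff.mp hz with rfl | rfl
        · exact (hNavoid hf.1 hfne.1 hfne.2 hzf).2.2.1 rfl
        · exact (hNavoid hf.1 hfne.1 hfne.2 hzf).2.2.2 rfl
    have hcovN0 : coveredVerts (insert s(u', w) (N \ {s(u, u'), s(v, w)})) =
        coveredVerts M := by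
      ext z
      constructor
      · rintro ⟨f, (rfl | hf), hz⟩
        · rcases Sym2.mem_iff.mp hz with rfl | rfl
          · exact hu'cov
          · exact hwcov
        · have hfne : f ≠ s(u, u') ∧ f ≠ s(v, w) := by
            have := hf.2
            simp only [Set.mem_insert_iff, Set.mem_singleton_iff] at this
            push_neg at this
            exact this
          have hzz := hNavoid hf.1 hfne.1 hfne.2 hz
          have hzN : z ∈ coveredVerts N := ⟨f, hf.1, hz⟩
          rw [hNcov'] at hzN
          rcases hzN with h | h
          · exact h
          · rcases h with rfl | h
            · exact absurd rfl hzz.1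
            · exact absurd (Set.mem_singleton_iff.mp h) hzz.2.1
      · intro hz
        have hzuv := hcovMnotuv z hz
        have hzN : z ∈ coveredVerts N := by rw [hNcov']; exact Or.inl hz
        obtain ⟨f, hfN', hzf⟩ := hzN
        by_cases h1 : f = s(u, u')
        · subst h1
          rcases Sym2.mem_iff.mp hzf with rfl | rfl
          · exact absurd rfl hzuv.1
          · exact ⟨s(z, w), Or.inl rfl, Sym2.mem_mk_left z w⟩
        by_cases h2 : f = s(v, w)
        · subst h2
          rcases Sym2.mem_iff.mp hzf with rfl | rfl
          · exact absurd rfl hzuv.2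
          · exact ⟨s(u', z), Or.inl rfl, Sym2.mem_mk_right u' z⟩
        · refine ⟨f, Or.inr ⟨hfN', ?_⟩, hzf⟩
          simp only [Set.mem_insert_iff, Set.mem_singleton_iff]
          push_neg
          exact ⟨h1, h2⟩
    have hNM := hMur _ hN0 hcovN0
    have hdiffeq : M \ {s(u', w)} = N \ {s(u, u'), s(v, w)} := by
      rw [← hNM]
      exact Set.insert_diff_self_of_notMem (fun h => hu'wN h.1)
    have hback : insert s(u, u') (insert s(v, w) (N \ {s(u, u'), s(v, w)})) = N := by
      ext f
      simp only [Set.mem_insert_iff, Set.mem_diff, Set.mem_singleton_iff]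
      constructor
      · rintro (rfl | rfl | ⟨hf, -⟩)
        · exact huu'N
        · exact hvwN
        · exact hf
      · intro hf
        by_cases h1 : f = s(u, u')
        · exact Or.inl h1
        by_cases h2 : f = s(v, w)
        · exact Or.inr (Or.inl h2)
        · refine Or.inr (Or.inr ⟨hf, ?_⟩)
          push_neg
          exact ⟨h1, h2⟩
    rw [hdiffeq, hback]
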